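/- Let M = {0,1}^ℤ with the left shift f((x_i)_{i∈ℤ}) = (x_{i+1})_{i∈ℤ}, and for θ ∈ (0,1) equip M with the metric d(x,y) = θ^{N(x,y)} where N(x,y) = max{N ≥ 0 : x_n = y_n for all |n| < N} (and d(x,x) = 0). Let q ∈ M be the point with q_i = 1 for all i ≠ −1 and q_{−1} = 0, let a > 1 satisfy aθ > 1, and define A : M → ℝ by A(x) = (a/θ³)·d(x,q) if d(x,q) ≤ θ³ and A(x) = a otherwise. Then A(q) = 0, while for every periodic point p of f of period m one has (1/m)·Σ_{j=0}^{m−1} log A(fʲ(p)) ≥ log(aθ) > 0; in particular the Lyapunov exponent of the scalar cocycle (f,A) at every periodic point is bounded below by log(aθ). -/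

import Mathlib

open Filter Topology Classical

/-- The left shift on the space `{0,1}^ℤ` of bilateral sequences. -/
def shiftMap (x : ℤ → Bool) : ℤ → Bool := fun i => x (i + 1)

/-- The distance `d(x,y) = θ^{N(x,y)}` on `{0,1}^ℤ`, where
`N(x,y) = max {N ≥ 0 : xₙ = yₙ for all |n| < N}` and `d(x,x) = 0`. -/
noncomputable def shiftDist (θ : ℝ) (x y : ℤ → Bool) : ℝ :=
  if x = y then 0 else θ ^ sSup {N : ℕ | ∀ n : ℤ, |n| < (N : ℤ) → x n = y n}

/-- The point `q` with `q i = 1` for `i ≠ -1` and `q₋₁ = 0`. -/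
def qpt : ℤ → Bool := fun i => if i = -1 then false else true

/-- The map `A(x) = (a/θ³) d(x,q)` if `d(x,q) ≤ θ³`, and `A(x) = a` otherwise. -/
noncomputable def Afun (θ a : ℝ) (x : ℤ → Bool) : ℝ :=
  if shiftDist θ x qpt ≤ θ ^ 3 then (a / θ ^ 3) * shiftDist θ x qpt else a

noncomputable def Nfun (x : ℤ → Bool) : ℕ :=
  sSup {N : ℕ | ∀ n : ℤ, |n| < (N : ℤ) → x n = qpt n}

lemma shift_iter (x : ℤ → Bool) (k : ℕ) (i : ℤ) : shiftMap^[k] x i = x (i + k) := by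
  induction k generalizing i with
  | zero => simp
  | succ n ih =>
    rw [Function.iterate_succ_apply']
    show (shiftMap^[n] x) (i + 1) = x (i + (n + 1 : ℕ))
    rw [ih]
    congr 1
    push_cast
    ring

lemma Nfun_window {x : ℤ → Bool} (hx : x ≠ qpt) :
    ∀ n : ℤ, |n| < (Nfun x : ℤ) → x n = qpt n := by
  have hne : ∃ n₀ : ℤ, x n₀ ≠ qpt n₀ := by
    by_contra h
    push_neg at h
    exact hx (funext h)
  obtain ⟨n₀, hn₀⟩ := hne
  have hbdd : BddAbove {N : ℕ | ∀ n : ℤ, |n| < (N : ℤ) → x n = qpt n} := by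
    refine ⟨n₀.natAbs, fun N hN => ?_⟩
    by_contra hlt
    push_neg at hlt
    refine hn₀ (hN n₀ ?_)
    rw [Int.abs_eq_natAbs]
    exact_mod_cast hlt
  have hmem : Nfun x ∈ {N : ℕ | ∀ n : ℤ, |n| < (N : ℤ) → x n = qpt n} :=
    Nat.sSup_mem ⟨0, by intro n hn; norm_num at hn; exact absurd hn (not_lt.mpr (abs_nonneg n))⟩ hbdd
  exact hmem

lemma shiftDist_eq {θ : ℝ} {x : ℤ → Bool} (hx : x ≠ qpt) :
    shiftDist θ x qpt = θ ^ Nfun x := by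
  rw [shiftDist, if_neg hx]; rfl

lemma log_Afun {θ a : ℝ} (hθ₀ : 0 < θ) (hθ₁ : θ < 1) (ha : 0 < a)
    {x : ℤ → Bool} (hx : x ≠ qpt) :
    Real.log (Afun θ a x) = Real.log a + ((Nfun x - 3 : ℕ) : ℝ) * Real.log θ := by
  rw [Afun, shiftDist_eq hx]
  set N := Nfun x with hN
  by_cases h3 : 3 ≤ N
  · rw [if_pos (pow_le_pow_of_le_one hθ₀.le hθ₁.le h3)]
    have hsplit : θ ^ N = θ ^ 3 * θ ^ (N - 3) := by
      rw [← pow_add]; congr 1; omega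
    rw [hsplit]
    have hθ3 : θ ^ 3 ≠ 0 := by positivity
    have : a / θ ^ 3 * (θ ^ 3 * θ ^ (N - 3)) = a * θ ^ (N - 3) := by
      field_simp
    rw [this, Real.log_mul ha.ne' (by positivity), Real.log_pow]
  · rw [if_neg ?_]
    · have : N - 3 = 0 := by omega
      simp [this]
    · push_neg
      exact pow_lt_pow_right_of_lt_one₀ hθ₀ hθ₁ (by omega)

lemma sum_bound (p : ℤ → Bool) (m : ℕ) (hm : 1 ≤ m) (hp : shiftMap^[m] p = p) :
    ∑ j ∈ Finset.range m, (Nfun (shiftMap^[j] p) - 3) ≤ m := by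
  haveI : NeZero m := ⟨by omega⟩
  set N : ℕ → ℕ := fun j => Nfun (shiftMap^[j] p) with hNdef
  have hper : ∀ n : ℤ, p (n + m) = p n := by
    intro n
    have := congrFun hp n
    rwa [shift_iter] at this
  have pz : ∀ (k : ℤ), ∀ n : ℤ, p (n + k * m) = p n := by
    intro k
    induction k using Int.induction_on with
    | zero => simp
    | succ i ih =>
      intro n
      have h1 : n + ((i : ℤ) + 1) * m = (n + m) + i * m := by ring
      rw [h1, ih, hper]
    | pred i ih =>
      intro n
      have h1 : n + (-(i : ℤ) - 1) * m = (n - m) + (-(i:ℤ)) * m := by ring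
      rw [h1, ih]
      have h2 := hper (n - m)
      rw [sub_add_cancel] at h2
      rw [h2]
  have hne : ∀ j : ℕ, shiftMap^[j] p ≠ qpt := by
    intro j hq
    have hcomm : shiftMap^[m] (shiftMap^[j] p) = shiftMap^[j] p := by
      rw [← Function.iterate_add_apply, Nat.add_comm, Function.iterate_add_apply, hp]
    rw [hq] at hcomm
    have := congrFun hcomm (-1 - m)
    rw [shift_iter] at this
    simp only [qpt] at this
    have h1 : (-1 - (m:ℤ) + m) = -1 := by ring
    rw [h1] at this
    have h2 : (-1 - (m:ℤ)) ≠ -1 := by omega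
    simp [h2] at this
  have window : ∀ (j : ℕ) (n : ℤ), |n| < (N j : ℤ) → p (n + j) = qpt n := by
    intro j n h
    have := Nfun_window (hne j) n h
    rwa [shift_iter] at this
  have hfalse : ∀ j : ℕ, 2 ≤ N j → p ((j : ℤ) - 1) = false := by
    intro j hj
    have := window j (-1) (by simp; omega)
    simp only [qpt] at this
    rw [show (-1 : ℤ) + j = j - 1 by ring] at this
    simpa using this
  have hNm : ∀ j : ℕ, 2 ≤ N j → N j < m := by
    intro j hj
    by_contra hle
    push_neg at hle
    have h1 := window j ((m : ℤ) - 1) (by rw [abs_of_nonneg (by omega)]; omega)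
    have h2 : ((m:ℤ) - 1) ≠ -1 := by omega
    simp only [qpt, if_neg h2] at h1
    have h3 : ((m:ℤ) - 1 + j) = ((j:ℤ) - 1) + m := by ring
    rw [h3, hper, hfalse j hj] at h1
    exact Bool.false_ne_true h1
  -- key: if two interval points coincide mod m, indices coincide
  have key : ∀ j t j' t' : ℕ, j < m → j' < m → 2 ≤ N j → 2 ≤ N j' →
      t < N j → t' < N j' → t' ≤ t →
      ((j + t : ℕ) : ZMod m) = ((j' + t' : ℕ) : ZMod m) → j = j' ∧ t = t' := by
    intro j t j' t' hjm hj'm hj2 hj'2 ht ht' htt heq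
    have hmod : ((j : ℤ) + t) ≡ ((j' : ℤ) + t') [ZMOD m] := by
      have : ((((j + t : ℕ) : ℤ)) : ZMod m) = (((j' + t' : ℕ) : ℤ) : ZMod m) := by
        push_cast
        push_cast at heq
        exact_mod_cast heq
      rw [ZMod.intCast_eq_intCast_iff] at this
      convert this using 2 <;> push_cast <;> ring
    obtain ⟨k, hk⟩ := hmod.dvd
    -- hk : (j':ℤ) + t' - ((j:ℤ) + t) = m * k
    by_cases hts : t = t'
    · subst hts
      constructor
      · -- j' - j = m * k with both < m
        have hjz : (j:ℤ) < m := by exact_mod_cast hjm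
        have hj'z : (j':ℤ) < m := by exact_mod_cast hj'm
        have hj0 : (0:ℤ) ≤ j := Int.natCast_nonneg j
        have hj'0 : (0:ℤ) ≤ j' := Int.natCast_nonneg j'
        have hjj : (j' : ℤ) - j = m * k := by linarith [hk]
        have hk0 : k = 0 := by
          rcases lt_trichotomy k 0 with h | h | h
          · have h1 : (m:ℤ) * k ≤ m * (-1) := by
              apply mul_le_mul_of_nonneg_left (by omega) (by positivity)
            linarith
          · exact h
          · have h1 : (m:ℤ) * 1 ≤ m * k := by
              apply mul_le_mul_of_nonneg_left (by omega) (by positivity)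
            linarith
        rw [hk0, mul_zero] at hjj
        have : (j:ℤ) = j' := by linarith
        exact_mod_cast this
      · rfl
    · exfalso
      have hts' : t' < t := by omega
      -- s := t - t' - 1 ≥ 0, window at j gives true, but value is p(j'-1) = false
      have hs : ((t : ℤ) - t' - 1) + j = ((j' : ℤ) - 1) + (-k) * m := by
        have : (j' : ℤ) + t' - ((j:ℤ) + t) = m * k := hk
        linarith
      have h1 := window j ((t:ℤ) - t' - 1)
        (by rw [abs_of_nonneg (by omega)]; omega)
      have h2 : ((t:ℤ) - t' - 1) ≠ -1 := by omega
      simp only [qpt, if_neg h2] at h1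
      rw [hs, pz (-k) ((j':ℤ) - 1), hfalse j' hj'2] at h1
      exact Bool.false_ne_true h1
  set S : Finset ℕ := (Finset.range m).filter (fun j => 2 ≤ N j) with hS
  set I : ℕ → Finset (ZMod m) :=
    fun j => (Finset.range (N j)).image (fun t => ((j + t : ℕ) : ZMod m)) with hI
  have hcard : ∀ j ∈ S, (I j).card = N j := by
    intro j hj
    simp only [hS, Finset.mem_filter, Finset.mem_range] at hj
    rw [hI]
    rw [Finset.card_image_of_injOn, Finset.card_range]
    intro t₁ ht₁ t₂ ht₂ h
    simp only [Finset.mem_coe, Finset.mem_range] at ht₁ ht₂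
    rcases le_total t₂ t₁ with hle | hle
    · exact ((key j t₁ j t₂ hj.1 hj.1 hj.2 hj.2 ht₁ ht₂ hle h).2)
    · exact ((key j t₂ j t₁ hj.1 hj.1 hj.2 hj.2 ht₂ ht₁ hle h.symm).2).symm
  have hdisj : ∀ j ∈ S, ∀ j' ∈ S, j ≠ j' → Disjoint (I j) (I j') := by
    intro j hj j' hj' hne'
    simp only [hS, Finset.mem_filter, Finset.mem_range] at hj hj'
    rw [Finset.disjoint_left]
    intro z hz hz'
    simp only [hI, Finset.mem_image, Finset.mem_range] at hz hz'
    obtain ⟨t, ht, rfl⟩ := hz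
    obtain ⟨t', ht', heq⟩ := hz'
    rcases le_total t' t with hle | hle
    · exact hne' (key j t j' t' hj.1 hj'.1 hj.2 hj'.2 ht ht' hle heq.symm).1
    · exact hne' (key j' t' j t hj'.1 hj.1 hj'.2 hj.2 ht' ht hle heq).1.symm
  calc ∑ j ∈ Finset.range m, (N j - 3)
      = ∑ j ∈ S, (N j - 3) := by
        rw [hS]
        rw [Finset.sum_filter_of_ne]
        intro j _ hj
        omega
    _ ≤ ∑ j ∈ S, N j := Finset.sum_le_sum (fun j _ => Nat.sub_le _ _)
    _ = ∑ j ∈ S, (I j).card := (Finset.sum_congr rfl hcard).symm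
    _ = (S.biUnion I).card := (Finset.card_biUnion hdisj).symm
    _ ≤ Fintype.card (ZMod m) := Finset.card_le_univ _
    _ = m := ZMod.card m

/-- **Example.** For `θ ∈ (0,1)` and `a > 1` with `aθ > 1`, the scalar cocycle generated by
`A` over the left shift satisfies `A(q) = 0`, while at every periodic point `p` of period `m`
the Lyapunov exponent `(1/m) ∑_{j<m} log A(fʲ(p))` is bounded below by `log (aθ) > 0`. -/
theorem shift_example_lyapunov_positive_at_periodic_points
    (θ a : ℝ) (hθ₀ : 0 < θ) (hθ₁ : θ < 1) (ha : 1 < a) (haθ : 1 < a * θ) :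
    Afun θ a qpt = 0 ∧ 0 < Real.log (a * θ) ∧
    ∀ (p : ℤ → Bool) (m : ℕ), 1 ≤ m → shiftMap^[m] p = p →
      Real.log (a * θ) ≤
        (m : ℝ)⁻¹ * ∑ j ∈ Finset.range m, Real.log (Afun θ a (shiftMap^[j] p)) := by
  have hθ3 : (0:ℝ) < θ ^ 3 := by positivity
  refine ⟨?_, Real.log_pos haθ, ?_⟩
  · rw [Afun, shiftDist, if_pos rfl, if_pos hθ3.le, mul_zero]
  · intro p m hm hp
    haveI : NeZero m := ⟨by omega⟩
    have hne : ∀ j : ℕ, shiftMap^[j] p ≠ qpt := by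
      intro j hq
      have hcomm : shiftMap^[m] (shiftMap^[j] p) = shiftMap^[j] p := by
        rw [← Function.iterate_add_apply, Nat.add_comm, Function.iterate_add_apply, hp]
      rw [hq] at hcomm
      have := congrFun hcomm (-1 - m)
      rw [shift_iter] at this
      simp only [qpt] at this
      have h1 : (-1 - (m:ℤ) + m) = -1 := by ring
      rw [h1] at this
      have h2 : (-1 - (m:ℤ)) ≠ -1 := by omega
      simp [h2] at this
    have hm0 : (0:ℝ) < m := by exact_mod_cast hm
    have hlogθ : Real.log θ < 0 := Real.log_neg hθ₀ hθ₁
    have hsum : ∑ j ∈ Finset.range m, Real.log (Afun θ a (shiftMap^[j] p)) =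
        m * Real.log a +
          ((∑ j ∈ Finset.range m, (Nfun (shiftMap^[j] p) - 3) : ℕ) : ℝ) * Real.log θ := by
      rw [Finset.sum_congr rfl
        (fun j _ => log_Afun hθ₀ hθ₁ (lt_trans one_pos ha) (hne j))]
      rw [Finset.sum_add_distrib, Finset.sum_const, Finset.card_range, ← Finset.sum_mul]
      push_cast
      ring
    rw [hsum]
    have hc : ((∑ j ∈ Finset.range m, (Nfun (shiftMap^[j] p) - 3) : ℕ) : ℝ) ≤ m := by
      exact_mod_cast sum_bound p m hm hp
    have h1 : (m : ℝ) * Real.log θ ≤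
        ((∑ j ∈ Finset.range m, (Nfun (shiftMap^[j] p) - 3) : ℕ) : ℝ) * Real.log θ :=
      mul_le_mul_of_nonpos_right hc hlogθ.le
    have h2 : (m:ℝ) * Real.log (a * θ) ≤
        m * Real.log a +
          ((∑ j ∈ Finset.range m, (Nfun (shiftMap^[j] p) - 3) : ℕ) : ℝ) * Real.log θ := by
      rw [Real.log_mul (by linarith) hθ₀.ne']
      nlinarith [h1]
    calc Real.log (a * θ) = (m:ℝ)⁻¹ * ((m:ℝ) * Real.log (a * θ)) := by
          field_simp
      _ ≤ _ := by
          apply mul_le_mul_of_nonneg_left h2 (by positivity)
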